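/- arXiv:math/0307139 — 7 statements merged into one kernel-verified Lean document; each statement's English description precedes it below -/
import Mathlib

section
/- Let S, S₁, S₂ be unital associative ℂ-algebras with S finite-dimensional over ℂ and semisimple, together with ℂ-algebra homomorphisms ι₁ : S → S₁ and ι₂ : S → S₂. Assume S₁ and S₂ are formally smooth, i.e. for every unital associative ℂ-algebra T and every nilpotent two-sided ideal I ⊆ T, every ℂ-algebra homomorphism from Sᵢ to T/I lifts through the quotient map T → T/I to a ℂ-algebra homomorphism Sᵢ → T. Let A be a unital associative ℂ-algebra equipped with ℂ-algebra homomorphisms j₁ : S₁ → A and j₂ : S₂ → A satisfying j₁ ∘ ι₁ = j₂ ∘ ι₂, and which is an amalgamated coproduct S₁ ∗_S S₂, meaning: for every unital associative ℂ-algebra C and all ℂ-algebra homomorphisms f₁ : S₁ → C, f₂ : S₂ → C with f₁ ∘ ι₁ = f₂ ∘ ι₂, there is a unique ℂ-algebra homomorphism g : A → C with g ∘ j₁ = f₁ and g ∘ j₂ = f₂. Then A is formally smooth: for every unital associative ℂ-algebra T, every nilpotent two-sided ideal I ⊆ T with quotient map π : T → T/I, and every ℂ-algebra homomorphism φ : A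 → T/I, there exists a ℂ-algebra homomorphism φ̃ : A → T with π ∘ φ̃ = φ. -/
/-- The kernel of `π` (a two-sided ideal) is nilpotent: there is `k ≥ 1` such that
every product of `k` elements of the kernel is zero. -/
def NilpotentKernel {T R : Type*} [Ring T] [Ring R] (π : T →+* R) : Prop :=
  ∃ k : ℕ, 1 ≤ k ∧ ∀ l : List T, l.length = k → (∀ x ∈ l, π x = 0) → l.prod = 0

/-- A unital associative `ℂ`-algebra `A` is formally smooth if every `ℂ`-algebra map
from `A` to a quotient `T/I` of a `ℂ`-algebra `T` by a nilpotent two-sided ideal `I`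
(encoded as a surjective `ℂ`-algebra map `π : T → R` with nilpotent kernel) lifts to `T`. -/
def FormSmooth (A : Type*) [Ring A] [Algebra ℂ A] : Prop :=
  ∀ (T : Type) [Ring T] [Algebra ℂ T] (R : Type) [Ring R] [Algebra ℂ R]
    (π : T →ₐ[ℂ] R), Function.Surjective π → NilpotentKernel (π : T →+* R) →
    ∀ φ : A →ₐ[ℂ] R, ∃ ψ : A →ₐ[ℂ] T, π.comp ψ = φ



open LinearMap TensorProduct Module

section TraceForm
variable (S : Type) [Ring S] [Algebra ℂ S]

noncomputable def trForm : LinearMap.BilinForm ℂ S :=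
  LinearMap.mk₂ ℂ (fun x y => LinearMap.trace ℂ S (Algebra.lmul ℂ S (x * y)))
    (fun x x' y => by simp only [add_mul, map_add])
    (fun c x y => by simp only [smul_mul_assoc, map_smul])
    (fun x y y' => by simp only [mul_add, map_add])
    (fun c x y => by simp only [mul_smul_comm, map_smul])

lemma trForm_apply (x y : S) :
    trForm S x y = LinearMap.trace ℂ S (Algebra.lmul ℂ S (x * y)) := rfl

lemma trForm_symm (x y : S) : trForm S x y = trForm S y x := by
  rw [trForm_apply, trForm_apply, map_mul (Algebra.lmul ℂ S),
    map_mul (Algebra.lmul ℂ S), LinearMap.trace_mul_comm]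

lemma trForm_assoc (x a y : S) : trForm S (x * a) y = trForm S x (a * y) := by
  rw [trForm_apply, trForm_apply, mul_assoc]

end TraceForm

section Nondeg
variable (S : Type) [Ring S] [Algebra ℂ S] [FiniteDimensional ℂ S] [IsSemisimpleRing S]

theorem trForm_nondeg : (trForm S).Nondegenerate := by
  classical
  set J : Submodule S S :=
    { carrier := {x | ∀ y, trForm S x y = 0}
      add_mem' := fun {a b} ha hb y => by
        simp only [Set.mem_setOf_eq] at ha hb ⊢
        rw [map_add, LinearMap.add_apply, ha y, hb y, add_zero]
      zero_mem' := fun y => by simp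
      smul_mem' := fun s x hx y => by
        simp only [Set.mem_setOf_eq] at hx ⊢
        rw [smul_eq_mul]
        have h1 : trForm S (s * x) y = trForm S (x * y) s := by
          rw [trForm_assoc, trForm_symm]
        rw [h1, trForm_assoc, hx] } with hJdef
  obtain ⟨K, hK⟩ := exists_isCompl J
  set p := J.linearProjOfIsCompl K hK with hp
  set e : S := (p 1 : S) with he
  have heJ : e ∈ J := (p 1).2
  have hxe : ∀ x ∈ J, x = x * e := by
    intro x hx
    have h1 : p x = ⟨x, hx⟩ := Submodule.linearProjOfIsCompl_apply_left hK ⟨x, hx⟩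
    have h2 : p x = x • p 1 := by
      conv_lhs => rw [show x = x • (1 : S) by rw [smul_eq_mul, mul_one]]
      rw [map_smul]
    have := congrArg (Subtype.val) (h1.symm.trans h2)
    simpa [smul_eq_mul] using this
  -- e is idempotent
  have hee : e = e * e := hxe e heJ
  -- left multiplication by e is a projection
  set L : S →ₗ[ℂ] S := Algebra.lmul ℂ S e with hL
  have hproj : LinearMap.IsProj (LinearMap.range L) L := by
    constructor
    · intro x; exact LinearMap.mem_range_self L x
    · rintro x ⟨z, rfl⟩
      show e * (e * z) = e * z
      rw [← mul_assoc, ← hee]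
  have htr : LinearMap.trace ℂ S L = (finrank ℂ (LinearMap.range L) : ℂ) := hproj.trace
  have htr0 : LinearMap.trace ℂ S L = 0 := by
    have := heJ 1
    rwa [trForm_apply, mul_one] at this
  have hrk : finrank ℂ (LinearMap.range L) = 0 := by
    have : ((finrank ℂ (LinearMap.range L) : ℂ)) = 0 := by rw [← htr, htr0]
    exact_mod_cast this
  have hL0 : LinearMap.range L = ⊥ := Submodule.finrank_eq_zero.mp hrk
  have he0 : e = 0 := by
    have : L 1 ∈ LinearMap.range L := LinearMap.mem_range_self L 1
    rw [hL0, Submodule.mem_bot] at this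
    simpa [hL] using this
  refine ⟨fun x hx => ?_, fun x hx => ?_⟩
  · have hxJ : x ∈ J := hx
    rw [hxe x hxJ, he0, mul_zero]
  · have hxJ : x ∈ J := fun y => (trForm_symm S x y).trans (hx y)
    rw [hxe x hxJ, he0, mul_zero]

end Nondeg

section Sep
variable (S : Type) [Ring S] [Algebra ℂ S] [FiniteDimensional ℂ S] [IsSemisimpleRing S]

theorem exists_sep :
    ∃ e : S ⊗[ℂ] S, (LinearMap.mul' ℂ S) e = 1 ∧
      ∀ s : S, ((s : S) ⊗ₜ[ℂ] (1 : S)) * e = e * ((1 : S) ⊗ₜ[ℂ] s) := by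
  classical
  have hnd := trForm_nondeg S
  have hsym : (trForm S).IsSymm := ⟨fun x y => by
    simpa using trForm_symm S x y⟩
  set b := Module.finBasis ℂ S with hb
  set d := (trForm S).dualBasis hnd b with hd
  -- coefficient lemma: b.repr x i = trForm x (d i)
  have hrepr : ∀ (x : S) i, b.repr x i = trForm S x (d i) := by
    intro x i
    conv_rhs => rw [← b.sum_repr x]
    rw [map_sum, LinearMap.sum_apply]
    have hstep : ∀ j, ((trForm S) ((b.repr x j) • b j)) (d i)
        = if j = i then b.repr x j else 0 := by
      intro j
      rw [map_smul, LinearMap.smul_apply, (trForm S).apply_dualBasis_right hnd hsym b]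
      by_cases h : j = i <;> simp [h]
    rw [Finset.sum_congr rfl fun j _ => hstep j, Finset.sum_ite_eq' Finset.univ i]
    simp
  -- the trace of left multiplication
  have htrace : ∀ y : S, LinearMap.trace ℂ S (Algebra.lmul ℂ S y)
      = ∑ i, b.repr (y * b i) i := by
    intro y
    rw [LinearMap.trace_eq_matrix_trace ℂ b, Matrix.trace]
    congr 1
    ext i
    rw [Matrix.diag_apply, LinearMap.toMatrix_apply]
    rfl
  refine ⟨∑ i, b i ⊗ₜ[ℂ] d i, ?_, ?_⟩
  · -- mul' of e = 1
    rw [map_sum]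
    simp only [LinearMap.mul'_apply]
    have key : ∀ y, trForm S (∑ i, b i * d i) y = trForm S 1 y := by
      intro y
      rw [map_sum, LinearMap.sum_apply]
      have step : ∀ i, trForm S (b i * d i) y = b.repr (y * b i) i := by
        intro i
        rw [trForm_symm, ← trForm_assoc, ← hrepr]
      calc (∑ i, trForm S (b i * d i) y) = ∑ i, b.repr (y * b i) i := by
            exact Finset.sum_congr rfl fun i _ => step i
        _ = LinearMap.trace ℂ S (Algebra.lmul ℂ S y) := (htrace y).symm
        _ = trForm S 1 y := by rw [trForm_apply, one_mul]
    have : trForm S ((∑ i, b i * d i) - 1) = 0 := by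
      ext y
      rw [map_sub, LinearMap.sub_apply, key, sub_self, LinearMap.zero_apply]
    have h0 : (∑ i, b i * d i) - 1 = 0 := by
      apply hnd.1
      intro y
      rw [this, LinearMap.zero_apply]
    exact sub_eq_zero.mp h0
  · -- the bimodule relation
    intro s
    rw [Finset.mul_sum, Finset.sum_mul]
    have hL : ∀ i, ((s : S) ⊗ₜ[ℂ] (1:S)) * (b i ⊗ₜ[ℂ] d i) = (s * b i) ⊗ₜ[ℂ] d i := by
      intro i
      rw [Algebra.TensorProduct.tmul_mul_tmul, one_mul]
    have hR : ∀ i, (b i ⊗ₜ[ℂ] d i) * ((1:S) ⊗ₜ[ℂ] s) = b i ⊗ₜ[ℂ] (d i * s) := by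
      intro i
      rw [Algebra.TensorProduct.tmul_mul_tmul, mul_one]
    rw [Finset.sum_congr rfl fun i _ => hL i, Finset.sum_congr rfl fun i _ => hR i]
    -- expand both sides in the basis b ⊗ d
    have hexpL : ∀ i, (s * b i) ⊗ₜ[ℂ] d i
        = ∑ j, trForm S (s * b i) (d j) • (b j ⊗ₜ[ℂ] d i) := by
      intro i
      conv_lhs => rw [← b.sum_repr (s * b i)]
      rw [TensorProduct.sum_tmul]
      exact Finset.sum_congr rfl fun j _ => by
        rw [TensorProduct.smul_tmul', hrepr]
    have hexpR : ∀ i, b i ⊗ₜ[ℂ] (d i * s)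
        = ∑ j, trForm S (d i * s) (b j) • (b i ⊗ₜ[ℂ] d j) := by
      intro i
      conv_lhs => rw [← d.sum_repr (d i * s)]
      rw [TensorProduct.tmul_sum]
      refine Finset.sum_congr rfl fun j _ => ?_
      rw [TensorProduct.tmul_smul]
      congr 1
      rw [hd, (trForm S).dualBasis_repr_apply]
    rw [Finset.sum_congr rfl fun i _ => hexpL i, Finset.sum_congr rfl fun i _ => hexpR i]
    rw [Finset.sum_comm]
    refine Finset.sum_congr rfl fun j _ => Finset.sum_congr rfl fun i _ => ?_
    -- coefficients agree: trForm (s * b j) (d i)  vs  trForm (d i * s) (b j) ... check index match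
    congr 1
    rw [trForm_symm, ← trForm_assoc]

end Sep

section Lift
variable {S T R : Type} [Ring S] [Algebra ℂ S] [Ring T] [Algebra ℂ T] [Ring R] [Algebra ℂ R]

noncomputable def mulMap (f g : S →ₐ[ℂ] T) : S ⊗[ℂ] S →ₗ[ℂ] T :=
  TensorProduct.lift ((LinearMap.mul ℂ T).compl₁₂ f.toLinearMap g.toLinearMap)

lemma mulMap_tmul (f g : S →ₐ[ℂ] T) (x y : S) : mulMap f g (x ⊗ₜ[ℂ] y) = f x * g y := rfl

lemma mulMap_left (f g : S →ₐ[ℂ] T) (s : S) (z : S ⊗[ℂ] S) :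
    mulMap f g ((s ⊗ₜ[ℂ] (1 : S)) * z) = f s * mulMap f g z := by
  induction z using TensorProduct.induction_on with
  | zero => simp
  | tmul x y =>
      rw [Algebra.TensorProduct.tmul_mul_tmul, one_mul, mulMap_tmul, mulMap_tmul,
        map_mul, mul_assoc]
  | add z w hz hw => rw [mul_add, map_add, hz, hw, map_add, mul_add]

lemma mulMap_right (f g : S →ₐ[ℂ] T) (s : S) (z : S ⊗[ℂ] S) :
    mulMap f g (z * ((1 : S) ⊗ₜ[ℂ] s)) = mulMap f g z * g s := by
  induction z using TensorProduct.induction_on with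
  | zero => simp
  | tmul x y =>
      rw [Algebra.TensorProduct.tmul_mul_tmul, mul_one, mulMap_tmul, mulMap_tmul,
        map_mul, mul_assoc]
  | add z w hz hw => rw [add_mul, map_add, hz, hw, map_add, add_mul]

lemma pi_mulMap (π : T →ₐ[ℂ] R) (f g : S →ₐ[ℂ] T) (h : π.comp f = π.comp g) (z : S ⊗[ℂ] S) :
    π (mulMap f g z) = π (f (LinearMap.mul' ℂ S z)) := by
  induction z using TensorProduct.induction_on with
  | zero => simp
  | tmul x y =>
      rw [mulMap_tmul, LinearMap.mul'_apply, map_mul, map_mul, map_mul]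
      congr 1
      exact (AlgHom.congr_fun h y).symm
  | add z w hz hw => rw [map_add, map_add, hz, hw, map_add, map_add, map_add]

/-- Conjugation by a unit, as an algebra homomorphism. -/
def conjHom (u v : T) (huv : u * v = 1) (hvu : v * u = 1) : T →ₐ[ℂ] T where
  toFun x := u * x * v
  map_one' := by show u * 1 * v = 1; rw [mul_one, huv]
  map_mul' x y := by
    show u * (x * y) * v = (u * x * v) * (u * y * v)
    calc u * (x * y) * v = u * x * (v * u) * y * v := by rw [hvu]; noncomm_ring
      _ = (u * x * v) * (u * y * v) := by noncomm_ring
  map_zero' := by show u * 0 * v = 0; rw [mul_zero, zero_mul]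
  map_add' x y := by show u * (x + y) * v = _; rw [mul_add, add_mul]
  commutes' r := by
    show u * algebraMap ℂ T r * v = algebraMap ℂ T r
    rw [← Algebra.commutes r u, mul_assoc, huv, mul_one]

lemma exists_inv_of (π : T →ₐ[ℂ] R) (hk : NilpotentKernel (π : T →+* R)) {u : T}
    (hu : π u = 1) : ∃ v, u * v = 1 ∧ v * u = 1 ∧ π v = 1 := by
  obtain ⟨k, hk1, hk2⟩ := hk
  have hn : (1 - u) ^ k = 0 := by
    have := hk2 (List.replicate k (1 - u)) (by simp)
      (fun x hx => by rw [List.eq_of_mem_replicate hx]; simp [map_sub, hu])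
    simpa [List.prod_replicate] using this
  have hun : IsUnit u := by
    have := IsNilpotent.isUnit_one_sub (⟨k, hn⟩ : IsNilpotent (1 - u))
    simpa using this
  obtain ⟨w, hw⟩ := hun
  refine ⟨↑w⁻¹, by rw [← hw]; exact w.mul_inv, by rw [← hw]; exact w.inv_mul, ?_⟩
  have h1 : π (↑w⁻¹ : T) * π u = 1 := by
    rw [← map_mul, ← hw, w.inv_mul, map_one]
  rwa [hu, mul_one] at h1

end Lift


/-- The amalgamated coproduct `A = S₁ ∗_S S₂` of formally smooth algebras `S₁, S₂`
over a finite-dimensional semisimple algebra `S` is formally smooth. -/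
theorem amalgamated_coproduct_formally_smooth
    (S S₁ S₂ A : Type) [Ring S] [Algebra ℂ S] [Ring S₁] [Algebra ℂ S₁]
    [Ring S₂] [Algebra ℂ S₂] [Ring A] [Algebra ℂ A]
    [FiniteDimensional ℂ S] [IsSemisimpleRing S]
    (ι₁ : S →ₐ[ℂ] S₁) (ι₂ : S →ₐ[ℂ] S₂)
    (hS₁ : FormSmooth S₁) (hS₂ : FormSmooth S₂)
    (j₁ : S₁ →ₐ[ℂ] A) (j₂ : S₂ →ₐ[ℂ] A)
    (hcomm : j₁.comp ι₁ = j₂.comp ι₂)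
    (huniv : ∀ (C : Type) [Ring C] [Algebra ℂ C] (f₁ : S₁ →ₐ[ℂ] C) (f₂ : S₂ →ₐ[ℂ] C),
      f₁.comp ι₁ = f₂.comp ι₂ → ∃! g : A →ₐ[ℂ] C, g.comp j₁ = f₁ ∧ g.comp j₂ = f₂) :
    FormSmooth A := by
  intro T _ _ R _ _ π hsur hker φ
  obtain ⟨ψ₁, hψ₁⟩ := hS₁ T R π hsur hker (φ.comp j₁)
  obtain ⟨ψ₂, hψ₂⟩ := hS₂ T R π hsur hker (φ.comp j₂)
  obtain ⟨e, he1, he2⟩ := exists_sep S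
  set f : S →ₐ[ℂ] T := ψ₁.comp ι₁ with hf
  set g : S →ₐ[ℂ] T := ψ₂.comp ι₂ with hg
  have hfg : π.comp f = π.comp g := by
    rw [hf, hg, ← AlgHom.comp_assoc, hψ₁, ← AlgHom.comp_assoc, hψ₂,
      AlgHom.comp_assoc, AlgHom.comp_assoc, hcomm]
  set u : T := mulMap f g e with hu
  have hπu : π u = 1 := by
    rw [hu, pi_mulMap π f g hfg e, he1, map_one, map_one]
  have hconj : ∀ s, f s * u = u * g s := fun s => by
    rw [hu, ← mulMap_left, ← mulMap_right, he2 s]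
  obtain ⟨v, huv, hvu, hπv⟩ := exists_inv_of π hker hπu
  set ψ₂' : S₂ →ₐ[ℂ] T := (conjHom u v huv hvu).comp ψ₂ with hψ₂'
  have hcompat : ψ₁.comp ι₁ = ψ₂'.comp ι₂ := by
    apply AlgHom.ext
    intro s
    show f s = u * g s * v
    calc f s = f s * (u * v) := by rw [huv, mul_one]
      _ = (f s * u) * v := (mul_assoc _ _ _).symm
      _ = u * g s * v := by rw [hconj]
  obtain ⟨ψ, ⟨hA1, hA2⟩, -⟩ := huniv T ψ₁ ψ₂' hcompat
  refine ⟨ψ, ?_⟩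
  obtain ⟨gR, -, hgRuniq⟩ := huniv R (φ.comp j₁) (φ.comp j₂)
    (by rw [AlgHom.comp_assoc, AlgHom.comp_assoc, hcomm])
  have h1 : π.comp ψ = gR := by
    apply hgRuniq
    constructor
    · rw [AlgHom.comp_assoc, hA1, hψ₁]
    · rw [AlgHom.comp_assoc, hA2]
      apply AlgHom.ext
      intro x
      show π (u * ψ₂ x * v) = φ (j₂ x)
      rw [map_mul, map_mul, hπu, hπv, one_mul, mul_one]
      exact AlgHom.congr_fun hψ₂ x
  have h2 : φ = gR := hgRuniq φ ⟨rfl, rfl⟩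
  rw [h1, ← h2]
end

section
/- Let S be a finite-dimensional semisimple unital associative ℂ-algebra, T a unital associative ℂ-algebra, I ⊆ T a nilpotent two-sided ideal, and π : T → T/I the quotient map. If α, β : S → T are ℂ-algebra homomorphisms with π ∘ α = π ∘ β, then there exists a unit t ∈ Tˣ with π(t) = 1 such that α(s) = t⁻¹ · β(s) · t for all s ∈ S. -/
section Aux

variable (S : Type) [Ring S] [Algebra ℂ S] [FiniteDimensional ℂ S]

open LinearMap

/-- The left regular trace form `(a, b) ↦ tr (L_{ab})`. -/
noncomputable def CQ.Bl : LinearMap.BilinForm ℂ S :=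
  (LinearMap.mul ℂ S).compr₂ ((LinearMap.trace ℂ S) ∘ₗ (LinearMap.mul ℂ S))

/-- The right regular trace form `(a, b) ↦ tr (R_{ab})`. -/
noncomputable def CQ.Br : LinearMap.BilinForm ℂ S :=
  (LinearMap.mul ℂ S).compr₂ ((LinearMap.trace ℂ S) ∘ₗ (LinearMap.mul ℂ S).flip)

lemma CQ.Bl_apply (a b : S) :
    CQ.Bl S a b = LinearMap.trace ℂ S (LinearMap.mul ℂ S (a * b)) := rfl

lemma CQ.Br_apply (a b : S) :
    CQ.Br S a b = LinearMap.trace ℂ S ((LinearMap.mul ℂ S).flip (a * b)) := rfl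

lemma CQ.mul_mul (a b : S) :
    LinearMap.mul ℂ S (a * b) = (LinearMap.mul ℂ S a) * (LinearMap.mul ℂ S b) := by
  ext v
  simp [LinearMap.mul_apply', Module.End.mul_apply, mul_assoc]

lemma CQ.flip_mul (a b : S) :
    (LinearMap.mul ℂ S).flip (a * b) =
      ((LinearMap.mul ℂ S).flip b) * ((LinearMap.mul ℂ S).flip a) := by
  ext v
  simp [LinearMap.mul_apply', Module.End.mul_apply, mul_assoc]

lemma CQ.Bl_symm (a b : S) : CQ.Bl S a b = CQ.Bl S b a := by
  rw [CQ.Bl_apply, CQ.Bl_apply, CQ.mul_mul, CQ.mul_mul, LinearMap.trace_mul_comm]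

lemma CQ.Bl_assoc (a b c : S) : CQ.Bl S (a * b) c = CQ.Bl S a (b * c) := by
  rw [CQ.Bl_apply, CQ.Bl_apply, mul_assoc]

lemma CQ.Bl_move (s a b : S) : CQ.Bl S (s * a) b = CQ.Bl S a (b * s) := by
  have h1 : CQ.Bl S (s * a) b
      = LinearMap.trace ℂ S (LinearMap.mul ℂ S s * LinearMap.mul ℂ S (a * b)) := by
    rw [CQ.Bl_apply, mul_assoc, CQ.mul_mul]
  have h2 : CQ.Bl S a (b * s)
      = LinearMap.trace ℂ S (LinearMap.mul ℂ S (a * b) * LinearMap.mul ℂ S s) := by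
    rw [CQ.Bl_apply, ← mul_assoc, CQ.mul_mul]
  rw [h1, h2, LinearMap.trace_mul_comm]

lemma CQ.Br_move (s a b : S) : CQ.Br S (s * a) b = CQ.Br S a (b * s) := by
  have h1 : CQ.Br S (s * a) b
      = LinearMap.trace ℂ S
          ((LinearMap.mul ℂ S).flip (a * b) * (LinearMap.mul ℂ S).flip s) := by
    rw [CQ.Br_apply, mul_assoc, CQ.flip_mul]
  have h2 : CQ.Br S a (b * s)
      = LinearMap.trace ℂ S
          ((LinearMap.mul ℂ S).flip s * (LinearMap.mul ℂ S).flip (a * b)) := by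
    rw [CQ.Br_apply, ← mul_assoc, CQ.flip_mul]
  rw [h1, h2, LinearMap.trace_mul_comm]

lemma CQ.Bl_idem (e : S) (he : e * e = e) (h0 : CQ.Bl S e e = 0) : e = 0 := by
  have hproj : LinearMap.IsProj (LinearMap.range (LinearMap.mul ℂ S e))
      (LinearMap.mul ℂ S e) := by
    refine ⟨fun x => LinearMap.mem_range_self _ x, ?_⟩
    rintro x ⟨v, rfl⟩
    show e * (e * v) = e * v
    rw [← mul_assoc, he]
  have htr := hproj.trace
  rw [CQ.Bl_apply, he, htr] at h0
  have h0' : Module.finrank ℂ (LinearMap.range (LinearMap.mul ℂ S e)) = 0 := by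
    exact_mod_cast h0
  have hbot := Submodule.finrank_eq_zero.mp h0'
  have hmem : e ∈ LinearMap.range (LinearMap.mul ℂ S e) := ⟨1, by simp⟩
  rw [hbot] at hmem
  simpa using hmem

lemma CQ.Br_idem (e : S) (he : e * e = e) (h0 : CQ.Br S e e = 0) : e = 0 := by
  have hproj : LinearMap.IsProj (LinearMap.range ((LinearMap.mul ℂ S).flip e))
      ((LinearMap.mul ℂ S).flip e) := by
    refine ⟨fun x => LinearMap.mem_range_self _ x, ?_⟩
    rintro x ⟨v, rfl⟩
    show (v * e) * e = v * e
    rw [mul_assoc, he]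
  have htr := hproj.trace
  rw [CQ.Br_apply, he, htr] at h0
  have h0' : Module.finrank ℂ (LinearMap.range ((LinearMap.mul ℂ S).flip e)) = 0 := by
    exact_mod_cast h0
  have hbot := Submodule.finrank_eq_zero.mp h0'
  have hmem : e ∈ LinearMap.range ((LinearMap.mul ℂ S).flip e) := ⟨1, by simp⟩
  rw [hbot] at hmem
  simpa using hmem

lemma CQ.nondeg_of [IsSemisimpleRing S] (Φ : LinearMap.BilinForm ℂ S)
    (hmove : ∀ s a b : S, Φ (s * a) b = Φ a (b * s))
    (hidem : ∀ e : S, e * e = e → Φ e e = 0 → e = 0) :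
    Φ.Nondegenerate := by
  refine LinearMap.BilinForm.Nondegenerate.ofSeparatingLeft ?_
  intro a ha
  let J : Ideal S :=
    { carrier := {a | ∀ b, Φ a b = 0}
      add_mem' := fun {u v} hu hv b => by
        have : Φ (u + v) b = Φ u b + Φ v b := by simp [map_add]
        rw [this, hu b, hv b, add_zero]
      zero_mem' := fun b => by simp
      smul_mem' := fun s a ha => by
        intro b
        have : (s • a : S) = s * a := rfl
        rw [this, hmove]
        exact ha (b * s) }
  obtain ⟨e, he, hJ⟩ := IsSemisimpleRing.ideal_eq_span_idempotent J
  have heJ : e ∈ J := by rw [hJ]; exact Ideal.subset_span rfl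
  have he0 : e = 0 := hidem e he (heJ e)
  have haJ : a ∈ J := ha
  rw [hJ, he0, Set.singleton_zero, Ideal.span_zero] at haJ
  simpa using haJ

lemma CQ.key_identity {ι : Type} [Fintype ι]
    (B : LinearMap.BilinForm ℂ S) (x y : Module.Basis ι ℂ S)
    (hsymm : ∀ a b : S, B a b = B b a)
    (hassoc : ∀ a b c : S, B (a * b) c = B a (b * c))
    (E1 : ∀ (v : S) (j : ι), x.repr v j = B v (y j))
    (E2 : ∀ (v : S) (i : ι), y.repr v i = B v (x i))
    (A : Type) [Ring A] [Algebra ℂ A] (φ ψ : S →ₐ[ℂ] A) (s : S) :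
    ∑ i, φ (s * x i) * ψ (y i) = ∑ i, φ (x i) * ψ (y i * s) := by
  have coeff : ∀ i j : ι, B (s * x i) (y j) = B (y j * s) (x i) := fun i j =>
    (hsymm _ _).trans (hassoc _ _ _).symm
  have L : ∀ i, φ (s * x i) = ∑ j, B (s * x i) (y j) • φ (x j) := by
    intro i
    conv_lhs => rw [← Module.Basis.sum_repr x (s * x i)]
    rw [map_sum]
    exact Finset.sum_congr rfl fun j _ => by rw [map_smul, E1]
  have Rr : ∀ i, ψ (y i * s) = ∑ j, B (y i * s) (x j) • ψ (y j) := by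
    intro i
    conv_lhs => rw [← Module.Basis.sum_repr y (y i * s)]
    rw [map_sum]
    exact Finset.sum_congr rfl fun j _ => by rw [map_smul, E2]
  calc ∑ i, φ (s * x i) * ψ (y i)
      = ∑ i, ∑ j, B (y j * s) (x i) • (φ (x j) * ψ (y i)) := by
        refine Finset.sum_congr rfl fun i _ => ?_
        rw [L i, Finset.sum_mul]
        refine Finset.sum_congr rfl fun j _ => ?_
        rw [smul_mul_assoc, coeff]
    _ = ∑ j, ∑ i, B (y j * s) (x i) • (φ (x j) * ψ (y i)) := Finset.sum_comm
    _ = ∑ i, φ (x i) * ψ (y i * s) := by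
        refine Finset.sum_congr rfl fun i _ => ?_
        rw [Rr i, Finset.mul_sum]
        exact Finset.sum_congr rfl fun j _ => (mul_smul_comm _ _ _).symm

end Aux

/-- Cuntz–Quillen: two `ℂ`-algebra maps from a finite-dimensional semisimple algebra `S`
to `T` that agree modulo a nilpotent two-sided ideal (the kernel of the quotient map
`π : T → T/I`) are conjugate by a unit `t` of `T` with `π t = 1`. -/
theorem lifts_conjugate_by_unit
    (S T R : Type) [Ring S] [Algebra ℂ S] [FiniteDimensional ℂ S] [IsSemisimpleRing S]
    [Ring T] [Algebra ℂ T] [Ring R] [Algebra ℂ R]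
    (π : T →ₐ[ℂ] R) (hπ : Function.Surjective π) (hnil : NilpotentKernel (π : T →+* R))
    (α β : S →ₐ[ℂ] T) (h : π.comp α = π.comp β) :
    ∃ t : Tˣ, π (t : T) = 1 ∧ ∀ s : S, α s = (↑t⁻¹ : T) * β s * (t : T) := by
  classical
  -- the two trace forms are nondegenerate
  have hBl : (CQ.Bl S).Nondegenerate :=
    CQ.nondeg_of S _ (CQ.Bl_move S) (CQ.Bl_idem S)
  have hBr : (CQ.Br S).Nondegenerate :=
    CQ.nondeg_of S _ (CQ.Br_move S) (CQ.Br_idem S)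
  have hsymm' : (CQ.Bl S).IsSymm := ⟨fun a b => CQ.Bl_symm S a b⟩
  -- dual bases for the left trace form
  set b₀ : Module.Basis (Fin (Module.finrank ℂ S)) ℂ S := Module.finBasis ℂ S with hb₀
  set y : Module.Basis (Fin (Module.finrank ℂ S)) ℂ S := (CQ.Bl S).dualBasis hBl b₀ with hy
  set x : Module.Basis (Fin (Module.finrank ℂ S)) ℂ S := (CQ.Bl S).dualBasis hBl y with hx
  have hxy : (CQ.Bl S).dualBasis hBl x = y := by
    rw [hx]
    exact LinearMap.BilinForm.dualBasis_dualBasis (B := CQ.Bl S) hBl hsymm' y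
  have E1 : ∀ (v : S) (j), x.repr v j = CQ.Bl S v (y j) := by
    intro v j
    rw [hx]
    exact LinearMap.BilinForm.dualBasis_repr_apply (B := CQ.Bl S) hBl y v j
  have E2 : ∀ (v : S) (i), y.repr v i = CQ.Bl S v (x i) := by
    intro v i
    rw [← hxy]
    exact LinearMap.BilinForm.dualBasis_repr_apply (B := CQ.Bl S) hBl x v i
  have key := CQ.key_identity S (CQ.Bl S) x y (CQ.Bl_symm S) (CQ.Bl_assoc S) E1 E2
  -- the Casimir-type element z
  set z : S := ∑ i, x i * y i with hz
  have zcentral : ∀ s : S, s * z = z * s := by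
    intro s
    have hk := key S (AlgHom.id ℂ S) (AlgHom.id ℂ S) s
    simp only [AlgHom.coe_id, id_eq] at hk
    calc s * z = ∑ i, s * x i * y i := by
          rw [hz, Finset.mul_sum]; exact Finset.sum_congr rfl fun i _ => (mul_assoc _ _ _).symm
      _ = ∑ i, x i * (y i * s) := hk
      _ = z * s := by
          rw [hz, Finset.sum_mul]; exact Finset.sum_congr rfl fun i _ => (mul_assoc _ _ _).symm
  -- trace of right multiplication equals `Bl z ·`
  have htr : ∀ w : S,
      LinearMap.trace ℂ S ((LinearMap.mul ℂ S).flip w) = CQ.Bl S z w := by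
    intro w
    rw [LinearMap.trace_eq_matrix_trace ℂ y, Matrix.trace]
    have hrhs : CQ.Bl S z w = ∑ i, CQ.Bl S (y i * w) (x i) := by
      rw [hz]
      have : (CQ.Bl S) (∑ i, x i * y i) w = ∑ i, (CQ.Bl S) (x i * y i) w := by
        rw [map_sum, LinearMap.coe_sum, Finset.sum_apply]
      rw [this]
      exact Finset.sum_congr rfl fun i _ => by
        rw [CQ.Bl_assoc, CQ.Bl_symm]
    rw [hrhs]
    refine Finset.sum_congr rfl fun i _ => ?_
    rw [Matrix.diag_apply, LinearMap.toMatrix_apply]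
    have : ((LinearMap.mul ℂ S).flip w) (y i) = y i * w := rfl
    rw [this, E2]
  -- z is invertible
  have hzc : ∀ c : S, z * c = 0 → c = 0 := by
    intro c hc
    apply hBr.1
    intro a
    have h1 : CQ.Br S c a = CQ.Bl S z (c * a) := htr (c * a)
    rw [h1, ← CQ.Bl_assoc, hc]
    simp
  obtain ⟨w, hzw⟩ : ∃ w : S, z * w = 1 := by
    have hinj : Function.Injective (LinearMap.mul ℂ S z) := by
      intro a b hab
      have hab' : z * a = z * b := hab
      have h0 : z * (a - b) = 0 := by rw [mul_sub, hab', sub_self]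
      exact sub_eq_zero.mp (hzc _ h0)
    have hsurj := (LinearMap.injective_iff_surjective).mp hinj
    obtain ⟨w, hw⟩ := hsurj 1
    exact ⟨w, hw⟩
  have hwz : w * z = 1 := by
    apply sub_eq_zero.mp
    apply hzc
    rw [mul_sub, mul_one, ← mul_assoc, hzw, one_mul, sub_self]
  have wcentral : ∀ s : S, s * w = w * s := by
    intro s
    calc s * w = (w * z) * (s * w) := by rw [hwz, one_mul]
      _ = w * ((z * s) * w) := by noncomm_ring
      _ = w * ((s * z) * w) := by rw [← zcentral]
      _ = (w * s) * (z * w) := by noncomm_ring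
      _ = w * s := by rw [hzw, mul_one]
  -- the intertwiner u and the unit t₀
  set u : T := ∑ i, β (x i) * α (y i) with hu'
  have hu : ∀ s : S, β s * u = u * α s := by
    intro s
    have hk := key T β α s
    calc β s * u = ∑ i, β (s * x i) * α (y i) := by
          rw [hu', Finset.mul_sum]
          exact Finset.sum_congr rfl fun i _ => by rw [map_mul, mul_assoc]
      _ = ∑ i, β (x i) * α (y i * s) := hk
      _ = u * α s := by
          rw [hu', Finset.sum_mul]
          exact Finset.sum_congr rfl fun i _ => by rw [map_mul, mul_assoc]
  set t₀ : T := u * α w with ht₀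
  have hπαβ : ∀ v : S, π (α v) = π (β v) := fun v => by
    have := DFunLike.congr_fun h v
    simpa using this
  have hπu : π u = π (α z) := by
    rw [hu', hz, map_sum, map_sum, map_sum]
    refine Finset.sum_congr rfl fun i _ => ?_
    rw [map_mul, map_mul, map_mul, ← hπαβ]
  have hπt : π t₀ = 1 := by
    rw [ht₀, map_mul, hπu, ← map_mul, ← map_mul, hzw, map_one, map_one]
  -- t₀ is a unit
  obtain ⟨k, hk1, hk⟩ := hnil
  have hπn : π (t₀ - 1) = 0 := by rw [map_sub, hπt, map_one, sub_self]
  have hnk : (t₀ - 1) ^ k = 0 := by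
    have := hk (List.replicate k (t₀ - 1)) (by simp)
      (fun x hx => by rw [List.eq_of_mem_replicate hx]; simpa using hπn)
    simpa [List.prod_replicate] using this
  have hUnit : IsUnit t₀ := by
    have h1 : IsUnit (1 + (t₀ - 1)) := IsNilpotent.isUnit_one_add ⟨k, hnk⟩
    have h2 : 1 + (t₀ - 1) = t₀ := by abel
    rwa [h2] at h1
  obtain ⟨t, ht⟩ := hUnit
  refine ⟨t, by rw [ht]; exact hπt, ?_⟩
  intro s
  have hcomm : β s * t₀ = t₀ * α s := by
    calc β s * (u * α w) = (β s * u) * α w := (mul_assoc _ _ _).symm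
      _ = (u * α s) * α w := by rw [hu]
      _ = u * α (s * w) := by rw [mul_assoc, ← map_mul]
      _ = u * α (w * s) := by rw [wcentral]
      _ = (u * α w) * α s := by rw [map_mul, mul_assoc]
  have hcommt : β s * (t : T) = (t : T) * α s := by rw [ht]; exact hcomm
  symm
  calc (↑t⁻¹ : T) * β s * (t : T) = (↑t⁻¹ : T) * (β s * (t : T)) := mul_assoc _ _ _
    _ = (↑t⁻¹ : T) * ((t : T) * α s) := by rw [hcommt]
    _ = ((↑t⁻¹ : T) * (t : T)) * α s := (mul_assoc _ _ _).symm
    _ = α s := by rw [Units.inv_mul, one_mul]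
end

section
/- Let T be a unital associative ℂ-algebra, I ⊆ T a nilpotent two-sided ideal, and π : T → T/I the quotient map. Suppose u, v ∈ T/I satisfy u⁴ = 1, v⁶ = 1 and u² = v³. Then there exist û, v̂ ∈ T with π(û) = u, π(v̂) = v, û⁴ = 1, v̂⁶ = 1 and û² = v̂³. (This expresses the formal smoothness of the group algebra ℂ[SL₂(ℤ)] = ℂℤ₄ ∗_{ℂℤ₂} ℂℤ₆ of the modular group, an amalgamated coproduct of semisimple algebras.) -/
open Polynomial in
/-- Newton iteration as a universal polynomial identity in a commutative ring. -/
lemma lift_root_poly {A : Type*} [CommRing A] (n : ℕ) (e : A)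
    (hq : ∀ x : A, ∃ y : A, (1 + e * x) ^ n = 1 + x + x ^ 2 * y) :
    ∀ m : ℕ, ∀ a : A, ∃ b c d : A,
      b = a + (1 - a ^ n) * c ∧ b ^ n = 1 + (1 - a ^ n) ^ (2 ^ m) * d := by
  intro m
  induction m with
  | zero =>
    intro a
    exact ⟨a, 0, -1, by ring, by ring⟩
  | succ m ih =>
    intro a
    obtain ⟨y, hy⟩ := hq (1 - a ^ n)
    set ε := 1 - a ^ n with hε
    set a' := a * (1 + e * ε) with ha'
    have key : 1 - a' ^ n = ε ^ 2 * (1 - y + ε * y) := by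
      rw [ha', mul_pow, hy]
      have : a ^ n = 1 - ε := by rw [hε]; ring
      rw [this]; ring
    obtain ⟨b, c, d, hbc, hbd⟩ := ih a'
    refine ⟨b, a * e + (1 - y + ε * y) * c * ε, (1 - y + ε * y) ^ (2 ^ m) * d, ?_, ?_⟩
    · rw [hbc, key, ha']; ring
    · rw [hbd, key, mul_pow, ← pow_mul]
      have h2 : 2 * 2 ^ m = 2 ^ (m + 1) := by rw [pow_succ]; ring
      rw [h2]; ring

/-- Lifting `n`-th roots of unity along an algebra map with nilpotent kernel. -/
lemma lift_pow_root {T R : Type} [Ring T] [Algebra ℂ T] [Ring R] [Algebra ℂ R]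
    (π : T →ₐ[ℂ] R) (k : ℕ) (hk : ∀ x : T, π x = 0 → x ^ k = 0)
    (n : ℕ) (e : ℂ)
    (hq : ∀ x : Polynomial ℂ, ∃ y : Polynomial ℂ,
      (1 + Polynomial.C e * x) ^ n = 1 + x + x ^ 2 * y)
    (a : T) (ha : π a ^ n = 1) :
    ∃ b : T, π b = π a ∧ b ^ n = 1 := by
  obtain ⟨b, c, d, hbc, hbd⟩ := lift_root_poly n (Polynomial.C e) hq k Polynomial.X
  set φ := Polynomial.aeval (R := ℂ) a with hφ
  have hεT : (1 - a ^ n) ^ k = 0 := hk _ (by rw [map_sub, map_one, map_pow, ha, sub_self])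
  have h1 : φ b = a + (1 - a ^ n) * φ c := by
    have := congrArg φ hbc
    simpa only [hφ, map_add, map_mul, map_sub, map_one, map_pow, Polynomial.aeval_X] using this
  have h2 : (φ b) ^ n = 1 := by
    have := congrArg φ hbd
    simp only [hφ, map_add, map_mul, map_sub, map_one, map_pow, Polynomial.aeval_X] at this
    rw [this]
    have hz : (1 - a ^ n) ^ (2 ^ k) = 0 := by
      rw [show 2 ^ k = k + (2 ^ k - k) from (Nat.add_sub_cancel' (Nat.lt_two_pow_self (n := k)).le).symm,
        pow_add, hεT, zero_mul]
    rw [hz, zero_mul, add_zero]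
  exact ⟨φ b, by
    rw [h1, map_add, map_mul, map_sub, map_one, map_pow, ha, sub_self, zero_mul, add_zero], h2⟩

lemma hq_poly (n : ℕ) (e : ℂ) (he : (n : ℂ) * e = 1) (hn : n = 4 ∨ n = 6) :
    ∀ x : Polynomial ℂ, ∃ y : Polynomial ℂ,
      (1 + Polynomial.C e * x) ^ n = 1 + x + x ^ 2 * y := by
  intro x
  set E := Polynomial.C e with hE
  have heP : (n : Polynomial ℂ) * E = 1 := by
    rw [hE, ← Polynomial.C_eq_natCast, ← map_mul, he, map_one]
  rcases hn with h | h
  · subst h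
    push_cast at heP
    exact ⟨6 * E ^ 2 + 4 * E ^ 3 * x + E ^ 4 * x ^ 2, by linear_combination x * heP⟩
  · subst h
    push_cast at heP
    exact ⟨15 * E ^ 2 + 20 * E ^ 3 * x + 15 * E ^ 4 * x ^ 2 + 6 * E ^ 5 * x ^ 3 + E ^ 6 * x ^ 4,
      by linear_combination x * heP⟩


/-- Formal smoothness of `ℂ[SL₂(ℤ)] = ℂℤ₄ ∗_{ℂℤ₂} ℂℤ₆`: given a `ℂ`-algebra `T`, a
nilpotent two-sided ideal `I ⊆ T` with quotient map `π : T → T/I` (encoded as a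
surjective algebra map with nilpotent kernel), and `u, v ∈ T/I` with `u⁴ = 1`,
`v⁶ = 1`, `u² = v³`, there are lifts `uhat, vhat ∈ T` satisfying the same relations. -/
theorem sl2z_group_algebra_formally_smooth
    (T R : Type) [Ring T] [Algebra ℂ T] [Ring R] [Algebra ℂ R]
    (π : T →ₐ[ℂ] R) (hπ : Function.Surjective π) (hnil : NilpotentKernel (π : T →+* R))
    (u v : R) (hu : u ^ 4 = 1) (hv : v ^ 6 = 1) (huv : u ^ 2 = v ^ 3) :
    ∃ uhat vhat : T, π uhat = u ∧ π vhat = v ∧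
      uhat ^ 4 = 1 ∧ vhat ^ 6 = 1 ∧ uhat ^ 2 = vhat ^ 3 := by
  obtain ⟨k, hk1, hknil⟩ := hnil
  -- pointwise nilpotency of the kernel
  have hk0 : ∀ x : T, π x = 0 → x ^ k = 0 := by
    intro x hx
    have := hknil (List.replicate k x) (by simp) (by
      intro y hy
      rw [List.eq_of_mem_replicate hy]
      exact hx)
    rwa [List.prod_replicate] at this
  -- lift u and v separately
  obtain ⟨a, rfl⟩ := hπ u
  obtain ⟨a2, rfl⟩ := hπ v
  obtain ⟨uhat, huπ, hu4⟩ := lift_pow_root π k hk0 4 (1/4)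
    (hq_poly 4 (1/4) (by norm_num) (Or.inl rfl)) a hu
  obtain ⟨w0, hw0π, hw06⟩ := lift_pow_root π k hk0 6 (1/6)
    (hq_poly 6 (1/6) (by norm_num) (Or.inr rfl)) a2 hv
  set E := uhat ^ 2 with hE
  clear_value E
  set F := w0 ^ 3 with hF
  clear_value F
  have hE2 : E * E = 1 := by rw [hE, ← pow_add]; exact hu4
  have hF2 : F * F = 1 := by rw [hF, ← pow_add]; exact hw06
  have hπE : π E = π a ^ 2 := by rw [hE, map_pow, huπ]
  have hπF : π F = π a2 ^ 3 := by rw [hF, map_pow, hw0π]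
  set c2 : T := algebraMap ℂ T (1/2) with hc2def
  have hc2 : (2 : T) * c2 = 1 := by
    rw [hc2def, show (2 : T) = algebraMap ℂ T 2 from (map_ofNat _ 2).symm, ← map_mul]
    norm_num
  have hcomm : ∀ t : T, c2 * t = t * c2 := fun t => by rw [hc2def]; exact Algebra.commutes _ t
  set z := c2 * (1 + E * F) with hz
  clear_value z
  -- π z = 1
  have hπEF : π E * π F = 1 := by
    rw [hπE, hπF, huv, ← pow_add]
    norm_num [hv]
  have hπz : π z = 1 := by
    rw [hz, map_mul, map_add, map_one, map_mul, hπEF, hc2def, AlgHom.commutes,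
      show (1 + 1 : R) = algebraMap ℂ R 2 from by rw [map_ofNat]; norm_num, ← map_mul]
    norm_num
  -- z is invertible with inverse zi (geometric series)
  set w : T := 1 - z with hw
  clear_value w
  have hz' : z = 1 - w := by rw [hw, sub_sub_cancel]
  have hπw : π w = 0 := by rw [hw, map_sub, map_one, hπz, sub_self]
  have hwk : w ^ k = 0 := hk0 w hπw
  set zi : T := ∑ i ∈ Finset.range k, w ^ i with hzi
  clear_value zi
  have hzzi : z * zi = 1 := by
    have h := mul_geom_sum w k
    rw [hwk, ← hzi] at h
    calc z * zi = -((w - 1) * zi) := by rw [← neg_mul, neg_sub, ← hz']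
    _ = 1 := by rw [h]; simp
  have hziz : zi * z = 1 := by
    have h := geom_sum_mul w k
    rw [hwk, ← hzi] at h
    calc zi * z = -(zi * (w - 1)) := by rw [← mul_neg, neg_sub, ← hz']
    _ = 1 := by rw [h]; simp
  have hπzi : π zi = 1 := by
    calc π zi = π zi * π z := by rw [hπz, mul_one]
    _ = π (zi * z) := (map_mul _ _ _).symm
    _ = 1 := by rw [hziz, map_one]
  -- the key intertwining relation z * F = E * z
  have hzF : z * F = E * z := by
    rw [hz]
    calc c2 * (1 + E * F) * F = c2 * ((1 + E * F) * F) := by rw [mul_assoc]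
    _ = c2 * (F + E * (F * F)) := by rw [add_mul, one_mul, mul_assoc]
    _ = c2 * (F + E) := by rw [hF2, mul_one]
    _ = c2 * (E + (E * E) * F) := by rw [hE2, one_mul, add_comm]
    _ = c2 * (E * (1 + E * F)) := by rw [mul_add E 1 (E * F), mul_one, mul_assoc]
    _ = (c2 * E) * (1 + E * F) := by rw [mul_assoc]
    _ = E * (c2 * (1 + E * F)) := by rw [hcomm E, mul_assoc]
  -- conjugated lift of v
  set vhat := z * w0 * zi with hvhat
  clear_value vhat
  have hconj : ∀ m : ℕ, vhat ^ m = z * w0 ^ m * zi := by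
    intro m
    induction m with
    | zero => simp [hzzi]
    | succ m ih =>
      rw [pow_succ, ih, hvhat, pow_succ]
      calc z * w0 ^ m * zi * (z * w0 * zi)
          = z * w0 ^ m * ((zi * z) * (w0 * zi)) := by
            simp only [mul_assoc]
      _ = z * (w0 ^ m * w0) * zi := by rw [hziz, one_mul]; simp only [mul_assoc]
  refine ⟨uhat, vhat, huπ, ?_, hu4, ?_, ?_⟩
  · rw [hvhat, map_mul, map_mul, hπz, hπzi, one_mul, mul_one, hw0π]
  · rw [hconj 6, hw06, mul_one, hzzi]
  · rw [← hE, hconj 3, ← hF, hzF, mul_assoc, hzzi, mul_one]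
end

section
/- Fix natural numbers a₁, a₂, b₁, b₂ and set n = a₁ + a₂ + b₁ + b₂. Let S₁ (size a₁×a₂), T₁ (a₂×a₁), S₂ (b₁×b₂), T₂ (b₂×b₁) be arbitrary complex matrices. Define the n×n block matrices M_s = blockdiag([[1_{a₁}, S₁],[0, −1_{a₂}]], [[1_{b₁}, S₂],[0, −1_{b₂}]]) and M_t = blockdiag([[1_{a₁}, 0],[T₁, −1_{a₂}]], [[−1_{b₁}, 0],[T₂, 1_{b₂}]]). Then M_s² = 1_n and M_t² = 1_n, and consequently there is a group homomorphism from the infinite dihedral group D∞, presented as ⟨s, t | s² = 1, t² = 1⟩ (PresentedGroup), to the group of invertible n×n complex matrices, sending s to M_s and t to M_t. -/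
open Matrix

/-- Relations of the infinite dihedral group `D∞ = ⟨s, t | s² = 1, t² = 1⟩`, with
`s` encoded as `true` and `t` as `false`. -/
def dihedralRels : Set (FreeGroup Bool) :=
  {FreeGroup.of true ^ 2, FreeGroup.of false ^ 2}

/-- The block matrix image of the generator `s`. -/
def Ms (a₁ a₂ b₁ b₂ : ℕ) (S₁ : Matrix (Fin a₁) (Fin a₂) ℂ) (S₂ : Matrix (Fin b₁) (Fin b₂) ℂ) :
    Matrix ((Fin a₁ ⊕ Fin a₂) ⊕ (Fin b₁ ⊕ Fin b₂)) ((Fin a₁ ⊕ Fin a₂) ⊕ (Fin b₁ ⊕ Fin b₂)) ℂ :=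
  fromBlocks (fromBlocks 1 S₁ 0 (-1)) 0 0 (fromBlocks 1 S₂ 0 (-1))

/-- The block matrix image of the generator `t`. -/
def Mt (a₁ a₂ b₁ b₂ : ℕ) (T₁ : Matrix (Fin a₂) (Fin a₁) ℂ) (T₂ : Matrix (Fin b₂) (Fin b₁) ℂ) :
    Matrix ((Fin a₁ ⊕ Fin a₂) ⊕ (Fin b₁ ⊕ Fin b₂)) ((Fin a₁ ⊕ Fin a₂) ⊕ (Fin b₁ ⊕ Fin b₂)) ℂ :=
  fromBlocks (fromBlocks 1 0 T₁ (-1)) 0 0 (fromBlocks (-1) 0 T₂ 1)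

/-- The explicit family of `D∞`-representations obtained from the one-quiver of `ℂD∞`:
the block matrices `Ms` and `Mt` square to the identity, and hence determine a group
homomorphism from `D∞ = ⟨s, t | s² = 1, t² = 1⟩` to invertible `n×n` complex matrices
sending `s ↦ Ms` and `t ↦ Mt`. -/
theorem dihedral_representation_from_quiver
    (a₁ a₂ b₁ b₂ : ℕ)
    (S₁ : Matrix (Fin a₁) (Fin a₂) ℂ) (T₁ : Matrix (Fin a₂) (Fin a₁) ℂ)
    (S₂ : Matrix (Fin b₁) (Fin b₂) ℂ) (T₂ : Matrix (Fin b₂) (Fin b₁) ℂ) :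
    Ms a₁ a₂ b₁ b₂ S₁ S₂ ^ 2 = 1 ∧ Mt a₁ a₂ b₁ b₂ T₁ T₂ ^ 2 = 1 ∧
      ∃ φ : PresentedGroup dihedralRels →*
          (Matrix ((Fin a₁ ⊕ Fin a₂) ⊕ (Fin b₁ ⊕ Fin b₂)) ((Fin a₁ ⊕ Fin a₂) ⊕ (Fin b₁ ⊕ Fin b₂)) ℂ)ˣ,
        (φ (PresentedGroup.of true) : Matrix _ _ ℂ) = Ms a₁ a₂ b₁ b₂ S₁ S₂ ∧
        (φ (PresentedGroup.of false) : Matrix _ _ ℂ) = Mt a₁ a₂ b₁ b₂ T₁ T₂ := by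
  have hMs : Ms a₁ a₂ b₁ b₂ S₁ S₂ * Ms a₁ a₂ b₁ b₂ S₁ S₂ = 1 := by
    simp [Ms, Matrix.fromBlocks_multiply, ← Matrix.fromBlocks_one]
  have hMt : Mt a₁ a₂ b₁ b₂ T₁ T₂ * Mt a₁ a₂ b₁ b₂ T₁ T₂ = 1 := by
    simp [Mt, Matrix.fromBlocks_multiply, ← Matrix.fromBlocks_one]
  refine ⟨by rw [sq]; exact hMs, by rw [sq]; exact hMt, ?_⟩
  set u : (Matrix ((Fin a₁ ⊕ Fin a₂) ⊕ (Fin b₁ ⊕ Fin b₂)) ((Fin a₁ ⊕ Fin a₂) ⊕ (Fin b₁ ⊕ Fin b₂)) ℂ)ˣ :=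
    ⟨_, _, hMs, hMs⟩ with hu
  set v : (Matrix ((Fin a₁ ⊕ Fin a₂) ⊕ (Fin b₁ ⊕ Fin b₂)) ((Fin a₁ ⊕ Fin a₂) ⊕ (Fin b₁ ⊕ Fin b₂)) ℂ)ˣ :=
    ⟨_, _, hMt, hMt⟩ with hv
  have h : ∀ r ∈ dihedralRels, FreeGroup.lift (fun b => if b then u else v) r = 1 := by
    intro r hr
    rcases hr with h | h <;> subst h <;>
      simp only [map_pow, FreeGroup.lift_apply_of, if_true, if_false] <;>
      ext <;> simp [sq, hMs, hMt, hu, hv]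
  refine ⟨PresentedGroup.toGroup h, ?_, ?_⟩ <;>
    simp [PresentedGroup.toGroup.of, hu, hv]
end

section
/- B³ = 1_n, i.e. the matrix B cubes to the n×n identity matrix, for every choice of the complex matrices S₂, S₄, S₆, T₁, T₃, T₅. -/
noncomputable section

open Matrix

/-- The primitive third root of unity `ρ = exp(2πi/3)`. -/
def ρ : ℂ := Complex.exp (2 * Real.pi * Complex.I / 3)

/-- The index set of the `6×6`-block matrices with block sizes `a 0, …, a 5`. -/
abbrev BIdx (a : Fin 6 → ℕ) := (i : Fin 6) × Fin (a i)

/-- The `n×n` matrix with the block `M` in block position `(i, j)` and zeroes elsewhere. -/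
def emb {a : Fin 6 → ℕ} (i j : Fin 6) (M : Matrix (Fin (a i)) (Fin (a j)) ℂ) :
    Matrix (BIdx a) (BIdx a) ℂ := fun p q =>
  if h : p.1 = i ∧ q.1 = j then
    M (Fin.cast (congrArg a h.1) p.2) (Fin.cast (congrArg a h.2) q.2)
  else 0

variable {a : Fin 6 → ℕ}


lemma rho_cube : ρ ^ 3 = 1 := by
  rw [ρ, ← Complex.exp_nat_mul]
  norm_num
  rw [show (3:ℂ) * (2 * Real.pi * Complex.I / 3) = 2 * Real.pi * Complex.I by ring]
  exact Complex.exp_two_pi_mul_I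

lemma rho_sq_add : ρ ^ 2 + ρ + 1 = 0 := by
  have hne : ρ ≠ 1 := by
    intro h
    rw [ρ, Complex.exp_eq_one_iff] at h
    obtain ⟨n, hn⟩ := h
    have hπ : (Real.pi : ℂ) ≠ 0 := by exact_mod_cast Real.pi_ne_zero
    have h2 : ((n : ℂ) * 3 - 1) * (2 * Real.pi * Complex.I) = 0 := by
      field_simp at hn; linear_combination (-(2 * Real.pi * Complex.I)) * hn
    rcases mul_eq_zero.mp h2 with h | h
    · have h3 : (n : ℂ) * 3 = 1 := by linear_combination h
      have : (n * 3 : ℤ) = (1 : ℤ) := by exact_mod_cast h3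
      omega
    · simp [Real.pi_ne_zero, Complex.I_ne_zero, hπ] at h
  have hfac : (ρ - 1) * (ρ ^ 2 + ρ + 1) = 0 := by linear_combination rho_cube
  rcases mul_eq_zero.mp hfac with h | h
  · exact absurd (sub_eq_zero.mp h) hne
  · exact h

lemma emb_mul (i j k : Fin 6) (M : Matrix (Fin (a i)) (Fin (a j)) ℂ)
    (N : Matrix (Fin (a j)) (Fin (a k)) ℂ) :
    emb (a := a) i j M * emb j k N = emb i k (M * N) := by
  ext ⟨p1, p2⟩ ⟨q1, q2⟩
  rw [mul_apply]
  rw [← Finset.univ_sigma_univ, Finset.sum_sigma]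
  by_cases hp : p1 = i
  · subst hp
    by_cases hq : q1 = k
    · subst hq
      rw [Finset.sum_eq_single j]
      · simp [emb, mul_apply]
      · intro b _ hb
        simp [emb, hb]
      · simp
    · simp [emb, hq]
  · simp [emb, hp]

lemma emb_mul_ne (i j k l : Fin 6) (h : j ≠ k) (M : Matrix (Fin (a i)) (Fin (a j)) ℂ)
    (N : Matrix (Fin (a k)) (Fin (a l)) ℂ) :
    emb (a := a) i j M * emb k l N = 0 := by
  ext ⟨p1, p2⟩ ⟨q1, q2⟩
  rw [mul_apply]
  apply Finset.sum_eq_zero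
  rintro ⟨r1, r2⟩ _
  by_cases hr : r1 = j
  · subst hr
    simp [emb, h]
  · simp [emb, hr]

lemma emb_smul (i j : Fin 6) (c : ℂ) (M : Matrix (Fin (a i)) (Fin (a j)) ℂ) :
    emb (a := a) i j (c • M) = c • emb i j M := by
  ext ⟨p1, p2⟩ ⟨q1, q2⟩
  simp only [emb, Matrix.smul_apply]
  split <;> simp

lemma one_eq : (1 : Matrix (BIdx a) (BIdx a) ℂ) =
    emb 0 0 1 + emb 1 1 1 + emb 2 2 1 + emb 3 3 1 + emb 4 4 1 + emb 5 5 1 := by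
  ext ⟨p1, p2⟩ ⟨q1, q2⟩
  simp only [Matrix.add_apply, Matrix.one_apply, emb]
  by_cases h : p1 = q1
  · subst h
    fin_cases p1 <;> simp [Matrix.one_apply]
  · have : (⟨p1, p2⟩ : BIdx a) ≠ ⟨q1, q2⟩ := by simp [h]
    fin_cases p1 <;> fin_cases q1 <;> simp_all

/-- The matrix `A`: diagonal blocks `(1, −1, 1, −1, 1, −1)` and off-diagonal blocks
`A₁₂ = iρS₁`, `A₁₆ = T₆`, `A₃₂ = T₂`, `A₃₄ = iρ²S₃`, `A₅₄ = T₄`, `A₅₆ = iS₅`. -/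
def Amat (S₁ : Matrix (Fin (a 0)) (Fin (a 1)) ℂ) (S₃ : Matrix (Fin (a 2)) (Fin (a 3)) ℂ)
    (S₅ : Matrix (Fin (a 4)) (Fin (a 5)) ℂ) (T₂ : Matrix (Fin (a 2)) (Fin (a 1)) ℂ)
    (T₄ : Matrix (Fin (a 4)) (Fin (a 3)) ℂ) (T₆ : Matrix (Fin (a 0)) (Fin (a 5)) ℂ) :
    Matrix (BIdx a) (BIdx a) ℂ :=
  emb 0 0 1 + emb 1 1 (-1) + emb 2 2 1 + emb 3 3 (-1) + emb 4 4 1 + emb 5 5 (-1) +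
    emb 0 1 ((Complex.I * ρ) • S₁) + emb 0 5 T₆ + emb 2 1 T₂ +
    emb 2 3 ((Complex.I * ρ ^ 2) • S₃) + emb 4 3 T₄ + emb 4 5 (Complex.I • S₅)

/-- The matrix `B`: diagonal blocks `(1, ρ, ρ², 1, ρ, ρ²)` and off-diagonal blocks
`B₂₁ = iT₁`, `B₂₃ = S₂`, `B₄₃ = iT₃`, `B₄₅ = ρS₄`, `B₆₁ = ρ²S₆`, `B₆₅ = iT₅`. -/
def Bmat (S₂ : Matrix (Fin (a 1)) (Fin (a 2)) ℂ) (S₄ : Matrix (Fin (a 3)) (Fin (a 4)) ℂ)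
    (S₆ : Matrix (Fin (a 5)) (Fin (a 0)) ℂ) (T₁ : Matrix (Fin (a 1)) (Fin (a 0)) ℂ)
    (T₃ : Matrix (Fin (a 3)) (Fin (a 2)) ℂ) (T₅ : Matrix (Fin (a 5)) (Fin (a 4)) ℂ) :
    Matrix (BIdx a) (BIdx a) ℂ :=
  emb 0 0 1 + emb 1 1 (ρ • 1) + emb 2 2 (ρ ^ 2 • 1) + emb 3 3 1 + emb 4 4 (ρ • 1) +
    emb 5 5 (ρ ^ 2 • 1) + emb 1 0 (Complex.I • T₁) + emb 1 2 S₂ +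
    emb 3 2 (Complex.I • T₃) + emb 3 4 (ρ • S₄) + emb 5 0 (ρ ^ 2 • S₆) +
    emb 5 4 (Complex.I • T₅)

/-- `B³ = 1`: the matrix `B` cubes to the `n×n` identity matrix, for every choice
of the complex matrices `S₂, S₄, S₆, T₁, T₃, T₅`. -/
theorem Bmat_cube_eq_one (a : Fin 6 → ℕ)
    (S₂ : Matrix (Fin (a 1)) (Fin (a 2)) ℂ) (S₄ : Matrix (Fin (a 3)) (Fin (a 4)) ℂ)
    (S₆ : Matrix (Fin (a 5)) (Fin (a 0)) ℂ) (T₁ : Matrix (Fin (a 1)) (Fin (a 0)) ℂ)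
    (T₃ : Matrix (Fin (a 3)) (Fin (a 2)) ℂ) (T₅ : Matrix (Fin (a 5)) (Fin (a 4)) ℂ) :
    Bmat S₂ S₄ S₆ T₁ T₃ T₅ ^ 3 = 1 := by
  rw [pow_succ, pow_two]
  simp only [Bmat]
  simp [emb_mul, emb_mul_ne, mul_add, add_mul, smul_mul_assoc, mul_smul_comm, smul_smul,
    Matrix.one_mul, Matrix.mul_one, emb_smul]
  rw [one_eq]
  have hsq := rho_sq_add
  match_scalars <;>
    first
      | ring1
      | linear_combination hsq
      | linear_combination ρ * hsq
      | linear_combination ρ ^ 2 * hsq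
      | linear_combination Complex.I * hsq
      | linear_combination Complex.I * ρ * hsq
      | linear_combination Complex.I * ρ ^ 2 * hsq
      | linear_combination (ρ - 1) * hsq
      | linear_combination (ρ ^ 4 - ρ ^ 3 + ρ ^ 2) * hsq
      | linear_combination (ρ ^ 4 - ρ ^ 3 + ρ - 1) * hsq
      | linear_combination (Complex.I * ρ ^ 2 - Complex.I * ρ + Complex.I) * hsq
end
end

section
/- Let m, k be natural numbers and let A₁, B₁ be m×m complex matrices and A₂, B₂ be k×k complex matrices satisfying A₁² = 1_m, B₁³ = 1_m, A₂² = 1_k, B₂³ = 1_k. Then there is a group homomorphism from the modular group SL₂(ℤ) = ℤ₄ ∗_{ℤ₂} ℤ₆, presented as ⟨s, t | s⁴ = 1, t⁶ = 1, s² = t³⟩ (PresentedGroup), to the group of invertible (m+k)×(m+k) complex matrices, sending s to the block-diagonal matrix diag(A₁, i·A₂) and t to diag(B₁, −B₂), where i ∈ ℂ is the imaginary unit. -/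
open Matrix

/-- Relations of the modular group `SL₂(ℤ) = ⟨s, t | s⁴ = 1, t⁶ = 1, s² = t³⟩`, with
`s` encoded as `true` and `t` as `false`. -/
def sl2Rels : Set (FreeGroup Bool) :=
  {FreeGroup.of true ^ 4, FreeGroup.of false ^ 6,
    FreeGroup.of true ^ 2 * (FreeGroup.of false ^ 3)⁻¹}

/-- Given `A₁, B₁ ∈ M_m(ℂ)` and `A₂, B₂ ∈ M_k(ℂ)` with `A₁² = 1`, `B₁³ = 1`,
`A₂² = 1`, `B₂³ = 1`, there is a group homomorphism from
`SL₂(ℤ) = ⟨s, t | s⁴ = 1, t⁶ = 1, s² = t³⟩` to the invertible `(m+k)×(m+k)` complex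
matrices sending `s ↦ diag(A₁, i·A₂)` and `t ↦ diag(B₁, −B₂)`. -/
theorem sl2z_representation_blockdiag (m k : ℕ)
    (A₁ B₁ : Matrix (Fin m) (Fin m) ℂ) (A₂ B₂ : Matrix (Fin k) (Fin k) ℂ)
    (hA₁ : A₁ ^ 2 = 1) (hB₁ : B₁ ^ 3 = 1) (hA₂ : A₂ ^ 2 = 1) (hB₂ : B₂ ^ 3 = 1) :
    ∃ φ : PresentedGroup sl2Rels →* (Matrix (Fin m ⊕ Fin k) (Fin m ⊕ Fin k) ℂ)ˣ,
      (φ (PresentedGroup.of true) : Matrix (Fin m ⊕ Fin k) (Fin m ⊕ Fin k) ℂ)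
          = fromBlocks A₁ 0 0 (Complex.I • A₂) ∧
      (φ (PresentedGroup.of false) : Matrix (Fin m ⊕ Fin k) (Fin m ⊕ Fin k) ℂ)
          = fromBlocks B₁ 0 0 (-B₂) := by
  set S : Matrix (Fin m ⊕ Fin k) (Fin m ⊕ Fin k) ℂ :=
    fromBlocks A₁ 0 0 (Complex.I • A₂) with hS
  set T : Matrix (Fin m ⊕ Fin k) (Fin m ⊕ Fin k) ℂ :=
    fromBlocks B₁ 0 0 (-B₂) with hT
  set D : Matrix (Fin m ⊕ Fin k) (Fin m ⊕ Fin k) ℂ :=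
    fromBlocks 1 0 0 (-1) with hD
  have h1 : A₁ * A₁ = 1 := by rw [← sq]; exact hA₁
  have h2 : (Complex.I • A₂) * (Complex.I • A₂) = -1 := by
    rw [smul_mul_smul_comm, ← sq, ← sq, hA₂, Complex.I_sq, neg_one_smul]
  have h3 : B₁ * B₁ * B₁ = 1 := by rw [← sq, ← pow_succ]; exact hB₁
  have h4 : -B₂ * -B₂ * -B₂ = -1 := by
    rw [neg_mul_neg, mul_neg, ← sq, ← pow_succ, hB₂]
  have hS2 : S ^ 2 = D := by
    rw [hS, hD, sq, fromBlocks_multiply]; simp [h1, h2]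
  have h5 : B₂ * B₂ * B₂ = 1 := by rw [← sq, ← pow_succ]; exact hB₂
  have hT3 : T ^ 3 = D := by
    rw [hT, hD, pow_succ, sq, fromBlocks_multiply, fromBlocks_multiply]
    simp [h3, h4, h5]
  have hD2 : D * D = 1 := by
    simp [hD, fromBlocks_multiply, ← fromBlocks_one]
  have hS4 : S ^ 4 = 1 := by
    rw [show (4 : ℕ) = 2 + 2 from rfl, pow_add, hS2, hD2]
  have hT6 : T ^ 6 = 1 := by
    rw [show (6 : ℕ) = 3 + 3 from rfl, pow_add, hT3, hD2]
  have hS4' : S * S ^ 3 = 1 := by rw [← pow_succ']; exact hS4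
  have hS4'' : S ^ 3 * S = 1 := by rw [← pow_succ]; exact hS4
  have hT6' : T * T ^ 5 = 1 := by rw [← pow_succ']; exact hT6
  have hT6'' : T ^ 5 * T = 1 := by rw [← pow_succ]; exact hT6
  let uS : (Matrix (Fin m ⊕ Fin k) (Fin m ⊕ Fin k) ℂ)ˣ := ⟨S, S ^ 3, hS4', hS4''⟩
  let uT : (Matrix (Fin m ⊕ Fin k) (Fin m ⊕ Fin k) ℂ)ˣ := ⟨T, T ^ 5, hT6', hT6''⟩
  let f : Bool → (Matrix (Fin m ⊕ Fin k) (Fin m ⊕ Fin k) ℂ)ˣ := fun b => if b then uS else uT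
  have hrel : ∀ r ∈ sl2Rels, FreeGroup.lift f r = 1 := by
    intro r hr
    rcases hr with h | h | h <;> subst h
    · rw [map_pow, FreeGroup.lift_apply_of]
      show uS ^ 4 = 1
      exact Units.ext (by show S ^ 4 = 1; exact hS4)
    · rw [map_pow, FreeGroup.lift_apply_of]
      show uT ^ 6 = 1
      exact Units.ext (by show T ^ 6 = 1; exact hT6)
    · rw [_root_.map_mul, map_pow, map_inv, map_pow, FreeGroup.lift_apply_of, FreeGroup.lift_apply_of]
      show uS ^ 2 * (uT ^ 3)⁻¹ = 1
      rw [mul_inv_eq_one]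
      exact Units.ext (by show S ^ 2 = T ^ 3; rw [hS2, hT3])
  refine ⟨PresentedGroup.toGroup hrel, ?_, ?_⟩
  · rw [PresentedGroup.toGroup.of]; rfl
  · rw [PresentedGroup.toGroup.of]; rfl
end

section
/- Let T be a unital associative ℂ-algebra, I ⊆ T a nilpotent two-sided ideal, and π : T → T/I the quotient map. Suppose u, v ∈ T/I satisfy u² = 1 and v³ = 1. Then there exist û, v̂ ∈ T with π(û) = u, π(v̂) = v, û² = 1 and v̂³ = 1. (This expresses the formal smoothness of the group algebra ℂ[PSL₂(ℤ)] = ℂℤ₂ ∗ ℂℤ₃ of the projective modular group.) -/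
open Polynomial

noncomputable section PSL2ZAux

/-- The polynomial `(1 + X)/2`, whose value at an element of order two is idempotent. -/
private def Pu : ℂ[X] := C (1/2) * (1 + X)

private lemma hc2 : (2 : ℂ[X]) * C (1/2 : ℂ) = 1 := by
  rw [← map_ofNat (C (R := ℂ)) 2, ← map_mul]; norm_num

private lemma hPuPu : Pu * Pu = Pu + (X^2 - 1) * C (1/2:ℂ)^2 := by
  unfold Pu; linear_combination (C (1/2:ℂ) * (1 + (X:ℂ[X]))) * hc2

private lemma h2Pu : (2 : ℂ[X]) * Pu - 1 = X := by
  unfold Pu; linear_combination (1 + (X:ℂ[X])) * hc2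

/-- A primitive cube root of unity in `ℂ`. -/
private def ω : ℂ := (-1 + (Real.sqrt 3 : ℂ) * Complex.I) / 2

private lemma hω : ω^2 + ω + 1 = 0 := by
  have hs : (Real.sqrt 3 : ℂ) * (Real.sqrt 3 : ℂ) = 3 := by
    norm_cast; rw [Real.mul_self_sqrt (by norm_num)]
  unfold ω
  linear_combination (Complex.I^2/4) * hs + (3/4) * Complex.I_sq

private lemma hω3 : ω^3 = 1 := by linear_combination (ω - 1) * hω

private def W : ℂ[X] := C ω

private lemma hW : W^2 + W + 1 = 0 := by
  unfold W
  rw [← Polynomial.C_pow, ← Polynomial.C_add, ← Polynomial.C_1, ← Polynomial.C_add, hω,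
    Polynomial.C_0]

private def c3 : ℂ[X] := C (1/3 : ℂ)

private lemma hc3 : (3 : ℂ[X]) * c3 = 1 := by
  unfold c3; rw [← map_ofNat (C (R := ℂ)) 3, ← map_mul]; norm_num

private def G0 : ℂ[X] := 1 + X + X^2
private def G1 : ℂ[X] := 1 - X - W*X + W*X^2
private def G2 : ℂ[X] := 1 + W*X - X^2 - W*X^2

/-- The three spectral projections of an element of order three. -/
private def F0 : ℂ[X] := c3 * G0
private def F1 : ℂ[X] := c3 * G1
private def F2 : ℂ[X] := c3 * G2

private lemma h00 : F0*F0 = F0 + (X^3-1)*(c3^2*(2+X)) := by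
  unfold F0 G0; linear_combination (c3 * (1 + X + X^2 : ℂ[X])) * hc3
private lemma h11 : F1*F1 = F1 + (X^3-1)*(c3^2*(2 - X - W*X)) := by
  unfold F1 G1
  linear_combination (c3^2*(X^2-2*X^3+X^4)) * hW + (c3 * (1 - X - W*X + W*X^2 : ℂ[X])) * hc3
private lemma h22 : F2*F2 = F2 + (X^3-1)*(c3^2*(2 + W*X)) := by
  unfold F2 G2
  linear_combination (c3^2*(X^2-2*X^3+X^4)) * hW + (c3 * (1 + W*X - X^2 - W*X^2 : ℂ[X])) * hc3
private lemma h01 : F0*F1 = (X^3-1)*(c3^2*(-1 + W*X)) := by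
  unfold F0 F1 G0 G1; ring
private lemma h02 : F0*F2 = (X^3-1)*(c3^2*(-1 - X - W*X)) := by
  unfold F0 F2 G0 G2; ring
private lemma h12 : F1*F2 = (X^3-1)*(c3^2*(-1 + X)) := by
  unfold F1 F2 G1 G2
  linear_combination (c3^2*(-X^2+2*X^3-X^4)) * hW
private lemma hsum : F0 + F1 + F2 = 1 := by
  unfold F0 F1 F2 G0 G1 G2; linear_combination hc3
private lemma hwt : F0 + W*F1 + W^2*F2 = X := by
  unfold F0 F1 F2 G0 G1 G2
  linear_combination (X:ℂ[X]) * hc3 + (c3*(1-2*X+X^2+W*X-W*X^2)) * hW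

variable {T R : Type} [Ring T] [Algebra ℂ T] [Ring R] [Algebra ℂ R]

/-- An element of order two lifts along a surjection with nil kernel. -/
private lemma lift_order_two (π : T →ₐ[ℂ] R) (hπ : Function.Surjective π)
    (hker : ∀ x ∈ RingHom.ker (π : T →+* R), IsNilpotent x)
    (u : R) (hu : u ^ 2 = 1) :
    ∃ uhat : T, π uhat = u ∧ uhat ^ 2 = 1 := by
  have hX2 : (Polynomial.aeval u) ((X:ℂ[X])^2 - 1) = 0 := by simp [hu]
  have he : IsIdempotentElem ((Polynomial.aeval u) Pu) := by
    show _ * _ = _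
    rw [← map_mul, hPuPu, map_add]
    have h0 : (Polynomial.aeval u) (((X:ℂ[X])^2 - 1) * C (1/2:ℂ)^2) = 0 := by
      rw [map_mul, hX2, zero_mul]
    rw [h0, add_zero]
  obtain ⟨e', he', hπe⟩ := exists_isIdempotentElem_eq_of_ker_isNilpotent
    (π : T →+* R) hker _ (RingHom.mem_range.mpr (hπ _)) he
  refine ⟨2 * e' - 1, ?_, ?_⟩
  · have hπe' : π e' = (Polynomial.aeval u) Pu := hπe
    have h1 : π (2 * e' - 1) = 2 * (Polynomial.aeval u) Pu - 1 := by
      rw [map_sub, map_mul, hπe', map_ofNat, map_one]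
    rw [h1]
    calc 2 * (Polynomial.aeval u) Pu - 1
        = (Polynomial.aeval u) ((2:ℂ[X]) * Pu - 1) := by
          rw [map_sub, map_mul, map_ofNat, map_one]
      _ = u := by rw [h2Pu, aeval_X]
  · have expand : (2 * e' - 1)^2 = 4 * (e' * e') - 4 * e' + 1 := by noncomm_ring
    rw [expand, he'.eq]; noncomm_ring

/-- An element of order three lifts along a surjection with nil kernel. -/
private lemma lift_order_three (π : T →ₐ[ℂ] R) (hπ : Function.Surjective π)
    (hker : ∀ x ∈ RingHom.ker (π : T →+* R), IsNilpotent x)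
    (v : R) (hv : v ^ 3 = 1) :
    ∃ vhat : T, π vhat = v ∧ vhat ^ 3 = 1 := by
  have hX3 : (Polynomial.aeval v) ((X:ℂ[X])^3 - 1) = 0 := by simp [hv]
  have keyI : ∀ P Q : ℂ[X], P * P = P + (X^3-1)*Q →
      IsIdempotentElem ((Polynomial.aeval v) P) := by
    intro P Q h
    show _ * _ = _
    rw [← map_mul, h, map_add, map_mul, hX3, zero_mul, add_zero]
  have keyO : ∀ P P' Q : ℂ[X], P * P' = (X^3-1)*Q →
      (Polynomial.aeval v) P * (Polynomial.aeval v) P' = 0 := by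
    intro P P' Q h
    rw [← map_mul, h, map_mul, hX3, zero_mul]
  have o01 := keyO F0 F1 _ h01
  have o02 := keyO F0 F2 _ h02
  have o12 := keyO F1 F2 _ h12
  have o10 := keyO F1 F0 _ (by rw [mul_comm]; exact h01)
  have o20 := keyO F2 F0 _ (by rw [mul_comm]; exact h02)
  have o21 := keyO F2 F1 _ (by rw [mul_comm]; exact h12)
  set e : Fin 3 → R := ![(Polynomial.aeval v) F0, (Polynomial.aeval v) F1,
    (Polynomial.aeval v) F2] with he_def
  have hCOI : CompleteOrthogonalIdempotents e := by
    refine ⟨⟨?_, ?_⟩, ?_⟩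
    · intro i
      fin_cases i
      · exact keyI F0 _ h00
      · exact keyI F1 _ h11
      · exact keyI F2 _ h22
    · intro i j hij
      fin_cases i <;> fin_cases j <;>
        simp_all [he_def] <;> assumption
    · rw [Fin.sum_univ_three]
      show (Polynomial.aeval v) F0 + (Polynomial.aeval v) F1 + (Polynomial.aeval v) F2 = 1
      rw [← map_add, ← map_add, hsum, map_one]
  obtain ⟨E, hE, hπE⟩ := CompleteOrthogonalIdempotents.lift_of_isNilpotent_ker
    (π : T →+* R) hker hCOI (fun i => RingHom.mem_range.mpr (hπ _))
  have haa := (hE.idem 0).eq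
  have hbb := (hE.idem 1).eq
  have hcc := (hE.idem 2).eq
  have hab : E 0 * E 1 = 0 := hE.ortho (show (0:Fin 3) ≠ 1 by decide)
  have hba : E 1 * E 0 = 0 := hE.ortho (show (1:Fin 3) ≠ 0 by decide)
  have hac : E 0 * E 2 = 0 := hE.ortho (show (0:Fin 3) ≠ 2 by decide)
  have hca : E 2 * E 0 = 0 := hE.ortho (show (2:Fin 3) ≠ 0 by decide)
  have hbc : E 1 * E 2 = 0 := hE.ortho (show (1:Fin 3) ≠ 2 by decide)
  have hcb : E 2 * E 1 = 0 := hE.ortho (show (2:Fin 3) ≠ 1 by decide)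
  have hsumT : E 0 + E 1 + E 2 = 1 := by
    have := hE.complete; rwa [Fin.sum_univ_three] at this
  refine ⟨E 0 + ω • E 1 + ω^2 • E 2, ?_, ?_⟩
  · have hπ0 : π (E 0) = (Polynomial.aeval v) F0 := congr_fun hπE 0
    have hπ1 : π (E 1) = (Polynomial.aeval v) F1 := congr_fun hπE 1
    have hπ2 : π (E 2) = (Polynomial.aeval v) F2 := congr_fun hπE 2
    have hWv : (Polynomial.aeval v) W = algebraMap ℂ R ω := by simp [W]
    have hv' : (Polynomial.aeval v) (F0 + W*F1 + W^2*F2) = v := by rw [hwt, aeval_X]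
    rw [map_add, map_add, map_mul, map_mul, map_pow, hWv] at hv'
    rw [map_add, map_add, map_smul, map_smul, hπ0, hπ1, hπ2]
    rw [Algebra.smul_def, Algebra.smul_def, map_pow]
    exact hv'
  · set a := E 0; set b := E 1; set c := E 2
    have h2 : (a + ω • b + ω^2 • c) * (a + ω • b + ω^2 • c)
        = a + (ω*ω) • b + (ω^2*ω^2) • c := by
      simp only [mul_add, add_mul, smul_mul_assoc, mul_smul_comm, smul_smul,
        haa, hbb, hcc, hab, hba, hac, hca, hbc, hcb, smul_zero, add_zero, zero_add]
    have h3 : (a + ω • b + ω^2 • c) ^ 3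
        = a + (ω*ω*ω) • b + (ω^2*ω^2*ω^2) • c := by
      rw [pow_succ, pow_two, h2]
      simp only [mul_add, add_mul, smul_mul_assoc, mul_smul_comm, smul_smul,
        haa, hbb, hcc, hab, hba, hac, hca, hbc, hcb, smul_zero, add_zero, zero_add]
      ring_nf
    rw [h3, show ω*ω*ω = 1 by linear_combination hω3,
      show ω^2*ω^2*ω^2 = 1 by linear_combination (ω^3 + 1) * hω3, one_smul, one_smul, hsumT]

end PSL2ZAux

/-- Formal smoothness of `ℂ[PSL₂(ℤ)] = ℂℤ₂ ∗ ℂℤ₃`: given a `ℂ`-algebra `T`, a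
nilpotent two-sided ideal `I ⊆ T` with quotient map `π : T → T/I` (encoded as a
surjective algebra map with nilpotent kernel), and `u, v ∈ T/I` with `u² = 1`,
`v³ = 1`, there are lifts `uhat, vhat ∈ T` satisfying the same relations. -/
theorem psl2z_group_algebra_formally_smooth
    (T R : Type) [Ring T] [Algebra ℂ T] [Ring R] [Algebra ℂ R]
    (π : T →ₐ[ℂ] R) (hπ : Function.Surjective π) (hnil : NilpotentKernel (π : T →+* R))
    (u v : R) (hu : u ^ 2 = 1) (hv : v ^ 3 = 1) :
    ∃ uhat vhat : T, π uhat = u ∧ π vhat = v ∧ uhat ^ 2 = 1 ∧ vhat ^ 3 = 1 := by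
  obtain ⟨k, hk1, hk⟩ := hnil
  have hker : ∀ x ∈ RingHom.ker (π : T →+* R), IsNilpotent x := by
    intro x hx
    refine ⟨k, ?_⟩
    have := hk (List.replicate k x) (by simp)
      (fun y hy => by rw [List.eq_of_mem_replicate hy]; exact hx)
    rwa [List.prod_replicate] at this
  obtain ⟨uhat, hu1, hu2⟩ := lift_order_two π hπ hker u hu
  obtain ⟨vhat, hv1, hv2⟩ := lift_order_three π hπ hker v hv
  exact ⟨uhat, vhat, hu1, hv1, hu2, hv2⟩
end
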